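/- Upper bound for the C_p functional, 1 < p < 2 (Lemma 2.12): Let 1 < p < 2 ≤ n. Then for all ξ, η ∈ ℂⁿ, C_p(ξ,η) ≤ c₃(p) · |η|² / (|ξ| + |ξ−η|)^{2−p}, where c₃(p) := sup_{s²+t²>0} [ (t²+s²+2s+1)^{p/2} − 1 − ps ] / [ (√(t²+s²+2s+1) + 1)^{p−2} (t²+s²) ]; moreover c₃(p) ∈ [p/2^{p−1}, +∞). -/

import Mathlib

open Real

set_option maxHeartbeats 1000000

/-- Bernoulli-type inequality: `x^α ≤ 1 + α(x-1)` for `x ≥ 0`, `α ∈ [0,1]`. -/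
lemma my_bernoulli {x α : ℝ} (hx : 0 ≤ x) (h0 : 0 ≤ α) (h1 : α ≤ 1) :
    x ^ α ≤ 1 + α * (x - 1) := by
  have h := Real.geom_mean_le_arith_mean2_weighted h0 (by linarith : (0:ℝ) ≤ 1 - α)
    hx (by norm_num : (0:ℝ) ≤ 1) (by ring)
  rw [Real.one_rpow, mul_one] at h
  linarith

/-- Every element of the defining set for `c3 p` is at most `8`. -/
lemma my_bound8 {p : ℝ} (hp1 : 1 < p) (hp2 : p < 2) (s t : ℝ) (hA : 0 < s ^ 2 + t ^ 2) :
    ((t ^ 2 + s ^ 2 + 2 * s + 1) ^ (p / 2) - 1 - p * s) /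
        ((Real.sqrt (t ^ 2 + s ^ 2 + 2 * s + 1) + 1) ^ (p - 2) * (t ^ 2 + s ^ 2)) ≤ 8 := by
  set q : ℝ := t ^ 2 + s ^ 2 + 2 * s + 1 with hqdef
  clear_value q
  have hq0 : 0 ≤ q := by nlinarith [sq_nonneg (s+1), sq_nonneg t]
  set T : ℝ := Real.sqrt q with hTdef
  clear_value T
  have hT0 : 0 ≤ T := hTdef ▸ Real.sqrt_nonneg q
  have hT2 : T ^ 2 = q := hTdef ▸ Real.sq_sqrt hq0
  have hqp : q ^ (p / 2) = T ^ p := by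
    rw [← hT2, ← Real.rpow_natCast T 2, ← Real.rpow_mul hT0]
    congr 1
    ring
  set B : ℝ := Real.sqrt (s ^ 2 + t ^ 2) with hBdef
  clear_value B
  have hB2 : B ^ 2 = s ^ 2 + t ^ 2 := hBdef ▸ Real.sq_sqrt hA.le
  have hB0 : 0 < B := hBdef ▸ Real.sqrt_pos.mpr hA
  have hsB : |s| ≤ B := by
    rw [hBdef, ← Real.sqrt_sq_eq_abs]
    exact Real.sqrt_le_sqrt (by nlinarith)
  have hTB : T ≤ B + 1 := by
    rw [hTdef, hqdef]
    calc Real.sqrt (t ^ 2 + s ^ 2 + 2 * s + 1) ≤ Real.sqrt ((B + 1) ^ 2) := by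
          apply Real.sqrt_le_sqrt
          have := abs_le.mp hsB
          nlinarith
      _ = B + 1 := Real.sqrt_sq (by positivity)
  have hD0 : (0:ℝ) < (T + 1) ^ (p - 2) * (t ^ 2 + s ^ 2) := by
    have h1 : (0:ℝ) < (T + 1) ^ (p - 2) := Real.rpow_pos_of_pos (by linarith) _
    nlinarith
  rw [div_le_iff₀ hD0]
  -- numerator bound via Bernoulli : q^(p/2) ≤ 1 + (p/2)(q-1)
  have hbern : q ^ (p / 2) ≤ 1 + p / 2 * (q - 1) :=
    my_bernoulli hq0 (by linarith) (by linarith)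
  have hN1 : q ^ (p / 2) - 1 - p * s ≤ p / 2 * (s ^ 2 + t ^ 2) := by
    have : q - 1 = s ^ 2 + t ^ 2 + 2 * s := by rw [hqdef]; ring
    nlinarith
  rcases le_or_gt T 3 with hT3 | hT3
  · -- small T : (T+1)^(p-2) ≥ 4^(p-2) ≥ 1/4
    have h4 : ((4:ℝ)) ^ (p - 2) ≤ (T + 1) ^ (p - 2) :=
      Real.rpow_le_rpow_of_nonpos (by linarith) (by linarith) (by linarith)
    have h4' : ((4:ℝ)) ^ (-1 : ℝ) ≤ (4:ℝ) ^ (p - 2) :=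
      Real.rpow_le_rpow_of_exponent_le (by norm_num) (by linarith)
    rw [Real.rpow_neg_one] at h4'
    have hq4 : (1:ℝ)/4 ≤ (T + 1) ^ (p - 2) := by
      calc (1:ℝ)/4 = (4:ℝ)⁻¹ := by norm_num
        _ ≤ _ := h4'.trans h4
    nlinarith
  · -- large T : B ≥ T - 1 > 2
    have hB2' : 2 < B := by linarith
    set c : ℝ := (B + 2) ^ (p - 2) with hcdef
    clear_value c
    have hc0 : 0 < c := by
      rw [hcdef]; exact Real.rpow_pos_of_pos (by linarith) _
    have hTp : T ^ p ≤ (B + 2) ^ p := by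
      apply Real.rpow_le_rpow hT0 (by linarith) (by linarith)
    have key1 : (B + 2) ^ p = c * (B + 2) ^ 2 := by
      rw [hcdef, ← Real.rpow_natCast (B+2) 2, ← Real.rpow_add (by linarith : (0:ℝ) < B + 2)]
      norm_num
    have key2 : (B + 2) ^ (2 - p) ≤ B + 2 := by
      calc (B + 2) ^ (2 - p) ≤ (B + 2) ^ (1:ℝ) :=
            Real.rpow_le_rpow_of_exponent_le (by linarith) (by linarith)
        _ = B + 2 := Real.rpow_one _
    have key3 : c * (B + 2) ^ (2 - p) = 1 := by
      rw [hcdef, ← Real.rpow_add (by linarith : (0:ℝ) < B + 2)]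
      norm_num
    have hNle : q ^ (p / 2) - 1 - p * s ≤ c * (B + 2) ^ 2 + 2 * B := by
      have habs := abs_le.mp hsB
      have : -(p * s) ≤ 2 * B := by nlinarith
      have hq1 : q ^ (p / 2) ≤ c * (B + 2) ^ 2 := by
        rw [hqp, ← key1]; exact hTp
      linarith
    have hc1 : 1 ≤ c * (B + 2) := by
      calc (1:ℝ) = c * (B + 2) ^ (2 - p) := key3.symm
        _ ≤ c * (B + 2) := mul_le_mul_of_nonneg_left key2 hc0.le
    have h2B : 2 * B ≤ 2 * B * (c * (B + 2)) := le_mul_of_one_le_right (by linarith) hc1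
    have hden : c ≤ (T + 1) ^ (p - 2) := by
      rw [hcdef]
      exact Real.rpow_le_rpow_of_nonpos (by linarith) (by linarith) (by linarith)
    have hfin : c * (B + 2) ^ 2 + 2 * B * (c * (B + 2)) ≤ 8 * (c * B ^ 2) := by
      have h : 0 ≤ c * ((B - 2) * (5 * B + 2)) :=
        mul_nonneg hc0.le (by nlinarith)
      linarith [h, sq_nonneg B]
    rw [hB2] at hfin
    have hlast : 8 * (c * (s ^ 2 + t ^ 2)) ≤ 8 * ((T + 1) ^ (p - 2) * (t ^ 2 + s ^ 2)) := by
      have h := mul_le_mul_of_nonneg_right hden (by positivity : (0:ℝ) ≤ s ^ 2 + t ^ 2)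
      linarith [h]
    linarith [hNle, h2B, hfin, hlast]

/-- There is `T > 1` with `(T+1)^(p-2)(T²-1) ≤ T^p - 1`. -/
lemma my_T_ineq {p : ℝ} (hp1 : 1 < p) (hp2 : p < 2) :
    ∃ T : ℝ, 1 < T ∧ (T + 1) ^ (p - 2) * (T ^ 2 - 1) ≤ T ^ p - 1 := by
  have h2p : (0:ℝ) < 2 - p := by linarith
  set T₀ : ℝ := (2 - p) ^ (-(p - 1)⁻¹ : ℝ) with hT₀def
  clear_value T₀
  have hT₀pos : 0 < T₀ := by rw [hT₀def]; exact Real.rpow_pos_of_pos h2p _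
  refine ⟨T₀ + 1, by linarith, ?_⟩
  set T : ℝ := T₀ + 1 with hTdef
  clear_value T
  have hT1 : 1 < T := by linarith
  have hT0 : 0 < T := by linarith
  have hne : T ≠ 0 := ne_of_gt hT0
  -- Bernoulli step
  have h1 : (1 + 1 / T) ^ (p - 1) ≤ 1 + (p - 1) * (1 / T) := by
    have hb := my_bernoulli (x := 1 + 1 / T) (α := p - 1)
      (by positivity) (by linarith) (by linarith)
    have : 1 + 1 / T - 1 = 1 / T := by ring
    rw [this] at hb
    exact hb
  have h2 : (T + 1) ^ (p - 1) = T ^ (p - 1) * (1 + 1 / T) ^ (p - 1) := by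
    rw [← Real.mul_rpow hT0.le (by positivity)]
    congr 1
    field_simp
  have f4 : T ^ (p - 2) * T = T ^ (p - 1) := by
    rw [← Real.rpow_add_one hne (p - 2)]
    congr 1; ring
  have f3 : T ^ (p - 1) * T = T ^ p := by
    rw [← Real.rpow_add_one hne (p - 1)]
    congr 1; ring
  have hZ : T ^ (p - 2) = T ^ (p - 1) / T := by
    field_simp [← f4]
    exact f4
  have h4 : (T + 1) ^ (p - 1) ≤ T ^ (p - 1) + (p - 1) * T ^ (p - 2) := by
    rw [h2]
    have hm := mul_le_mul_of_nonneg_left h1 (Real.rpow_nonneg hT0.le (p - 1))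
    have he : T ^ (p - 1) * (1 + (p - 1) * (1 / T)) = T ^ (p - 1) + (p - 1) * T ^ (p - 2) := by
      rw [hZ]; field_simp
    linarith [hm.trans_eq he]
  have f1 : (T + 1) ^ (p - 2) * (T + 1) = (T + 1) ^ (p - 1) := by
    rw [← Real.rpow_add_one (by positivity : T + 1 ≠ 0) (p - 2)]
    congr 1; ring
  have f5 : 1 ≤ (2 - p) * T ^ (p - 1) := by
    have hle : T₀ ^ (p - 1) ≤ T ^ (p - 1) :=
      Real.rpow_le_rpow hT₀pos.le (by linarith) (by linarith)
    have hval : T₀ ^ (p - 1) = (2 - p)⁻¹ := by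
      rw [hT₀def, ← Real.rpow_mul h2p.le]
      rw [show -(p - 1)⁻¹ * (p - 1) = -1 by rw [neg_mul, inv_mul_cancel₀ (ne_of_gt (by linarith : (0:ℝ) < p - 1))]]
      exact Real.rpow_neg_one _
    have : (2 - p)⁻¹ ≤ T ^ (p - 1) := hval ▸ hle
    calc (1:ℝ) = (2 - p) * (2 - p)⁻¹ := (mul_inv_cancel₀ (ne_of_gt h2p)).symm
      _ ≤ (2 - p) * T ^ (p - 1) := by
          exact mul_le_mul_of_nonneg_left this h2p.le
  have f6 : 0 ≤ (p - 1) * T ^ (p - 2) := by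
    have := Real.rpow_nonneg hT0.le (p - 2)
    nlinarith
  have step1 : (T + 1) ^ (p - 2) * (T ^ 2 - 1) = (T + 1) ^ (p - 1) * (T - 1) := by
    linear_combination (T - 1) * f1
  have step2 : (T + 1) ^ (p - 1) * (T - 1) ≤
      (T ^ (p - 1) + (p - 1) * T ^ (p - 2)) * (T - 1) :=
    mul_le_mul_of_nonneg_right h4 (by linarith)
  have step3 : (T ^ (p - 1) + (p - 1) * T ^ (p - 2)) * (T - 1)
      = T ^ p - (2 - p) * T ^ (p - 1) - (p - 1) * T ^ (p - 2) := by
    linear_combination f3 + (p - 1) * f4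
  linarith [step1, step2, step3, f5, f6]



/-- The functional `C_p(ξ,η) = |ξ|^p - |ξ-η|^p - p|ξ-η|^{p-2} Re⟨ξ-η, η⟩` on `ℂⁿ`. -/
noncomputable def Cp (n : ℕ) (p : ℝ) (ξ η : EuclideanSpace ℂ (Fin n)) : ℝ :=
  ‖ξ‖ ^ p - ‖ξ - η‖ ^ p - p * ‖ξ - η‖ ^ (p - 2) * (inner ℂ (ξ - η) η : ℂ).re

/-- The constant `c₃(p)`: the supremum over `s² + t² > 0` of
`[(t²+s²+2s+1)^{p/2} - 1 - ps] / [(√(t²+s²+2s+1) + 1)^{p-2}(t²+s²)]`. -/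
noncomputable def c3 (p : ℝ) : ℝ :=
  sSup { r : ℝ | ∃ s t : ℝ, 0 < s ^ 2 + t ^ 2 ∧
    r = ((t ^ 2 + s ^ 2 + 2 * s + 1) ^ (p / 2) - 1 - p * s) /
        ((Real.sqrt (t ^ 2 + s ^ 2 + 2 * s + 1) + 1) ^ (p - 2) * (t ^ 2 + s ^ 2)) }

/-- Upper bound for the `C_p` functional for `1 < p < 2 ≤ n`:
`C_p(ξ,η) ≤ c₃(p) |η|² / (|ξ| + |ξ-η|)^{2-p}` for all `ξ, η ∈ ℂⁿ` (with the right-hand side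
interpreted as `0` when `ξ = η = 0`), and `c₃(p) ∈ [p/2^{p-1}, ∞)`. -/
theorem Cp_upper_bound_small_p {n : ℕ} (p : ℝ) (hp1 : 1 < p) (hp2 : p < 2) (hn : 2 ≤ n) :
    (∀ ξ η : EuclideanSpace ℂ (Fin n),
      Cp n p ξ η ≤ c3 p * ‖η‖ ^ 2 / (‖ξ‖ + ‖ξ - η‖) ^ (2 - p))
      ∧ p / (2 : ℝ) ^ (p - 1) ≤ c3 p := by
  have hp0 : (0:ℝ) < p := by linarith
  set S : Set ℝ := { r : ℝ | ∃ s t : ℝ, 0 < s ^ 2 + t ^ 2 ∧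
    r = ((t ^ 2 + s ^ 2 + 2 * s + 1) ^ (p / 2) - 1 - p * s) /
        ((Real.sqrt (t ^ 2 + s ^ 2 + 2 * s + 1) + 1) ^ (p - 2) * (t ^ 2 + s ^ 2)) }
    with hSdef
  have hc3S : c3 p = sSup S := rfl
  have hbdd : BddAbove S := by
    refine ⟨8, ?_⟩
    rintro r ⟨s, t, hA, rfl⟩
    exact my_bound8 hp1 hp2 s t hA
  have hmemle : ∀ s t : ℝ, 0 < s ^ 2 + t ^ 2 →
      ((t ^ 2 + s ^ 2 + 2 * s + 1) ^ (p / 2) - 1 - p * s) /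
        ((Real.sqrt (t ^ 2 + s ^ 2 + 2 * s + 1) + 1) ^ (p - 2) * (t ^ 2 + s ^ 2)) ≤ c3 p := by
    intro s t hA
    rw [hc3S]
    exact le_csSup hbdd ⟨s, t, hA, rfl⟩
  -- `1 ≤ c3 p`
  have h1c3 : (1:ℝ) ≤ c3 p := by
    obtain ⟨T, hT1, hkey⟩ := my_T_ineq hp1 hp2
    set t : ℝ := Real.sqrt (T ^ 2 - 1) with htdef
    clear_value t
    have ht2 : t ^ 2 = T ^ 2 - 1 := by rw [htdef]; exact Real.sq_sqrt (by nlinarith)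
    have hA : (0:ℝ) < 0 ^ 2 + t ^ 2 := by rw [ht2]; nlinarith
    refine le_trans ?_ (hmemle 0 t hA)
    have e1 : t ^ 2 + 0 ^ 2 + 2 * 0 + 1 = T ^ 2 := by rw [ht2]; ring
    rw [e1, Real.sqrt_sq (by linarith : (0:ℝ) ≤ T)]
    have e2 : ((T:ℝ) ^ 2) ^ (p / 2) = T ^ p := by
      rw [← Real.rpow_natCast T 2, ← Real.rpow_mul (by linarith : (0:ℝ) ≤ T)]
      congr 1; push_cast; ring
    rw [e2]
    have hD0 : (0:ℝ) < (T + 1) ^ (p - 2) * (t ^ 2 + 0 ^ 2) := by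
      have : (0:ℝ) < (T + 1) ^ (p - 2) := Real.rpow_pos_of_pos (by linarith) _
      nlinarith
    rw [le_div_iff₀ hD0]
    have e3 : t ^ 2 + 0 ^ 2 = T ^ 2 - 1 := by rw [ht2]; ring
    rw [e3]
    nlinarith [hkey]
  -- `p / 2^(p-1) ≤ c3 p`
  have hpc3 : p / (2:ℝ) ^ (p - 1) ≤ c3 p := by
    have hA : (0:ℝ) < (-2) ^ 2 + 0 ^ 2 := by norm_num
    refine le_trans ?_ (hmemle (-2) 0 hA)
    have e1 : (0:ℝ) ^ 2 + (-2) ^ 2 + 2 * (-2) + 1 = 1 := by norm_num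
    rw [e1, Real.one_rpow, Real.sqrt_one]
    have e2 : (2:ℝ) ^ (p - 1) = 2 ^ (p - 2) * 2 := by
      rw [← Real.rpow_add_one two_ne_zero]; congr 1; ring
    have hpow : (0:ℝ) < (2:ℝ) ^ (p - 2) := Real.rpow_pos_of_pos two_pos _
    have e3 : ((1:ℝ) + 1) = 2 := by norm_num
    rw [e3]
    have hne : ((2:ℝ) ^ (p - 1)) ≠ 0 := by positivity
    rw [show (1:ℝ) - 1 - p * (-2) = 2 * p by ring]
    rw [e2]
    rw [show ((0:ℝ) ^ 2 + (-2) ^ 2) = 4 by norm_num]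
    rw [div_le_div_iff₀ (by positivity) (by positivity)]
    ring_nf
    nlinarith [hpow]
  refine ⟨?_, hpc3⟩
  intro ξ η
  by_cases hη : η = 0
  · subst hη
    simp only [Cp, sub_zero, inner_zero_right, Complex.zero_re, mul_zero, sub_self,
      norm_zero, ne_eq]
    norm_num
  by_cases hw : ξ - η = 0
  · have hξη : ξ = η := sub_eq_zero.mp hw
    subst hξη
    have hm : (0:ℝ) < ‖ξ‖ := norm_pos_iff.mpr hη
    simp only [Cp, sub_self, norm_zero, inner_zero_left, Complex.zero_re, mul_zero, add_zero]
    rw [Real.zero_rpow (ne_of_gt hp0), sub_zero, sub_zero]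
    have e : ‖ξ‖ ^ p = ‖ξ‖ ^ 2 / ‖ξ‖ ^ (2 - p) := by
      rw [← Real.rpow_natCast ‖ξ‖ 2, ← Real.rpow_sub hm]
      congr 1; push_cast; ring
    rw [e]
    have hd : (0:ℝ) < ‖ξ‖ ^ (2 - p) := Real.rpow_pos_of_pos hm _
    have h2 : ‖ξ‖ ^ 2 ≤ c3 p * ‖ξ‖ ^ 2 := le_mul_of_one_le_left (by positivity) h1c3
    exact div_le_div_of_nonneg_right h2 hd.le
  · -- main case : `ξ - η ≠ 0` and `η ≠ 0`
    have hLpos : (0:ℝ) < ‖ξ - η‖ := norm_pos_iff.mpr hw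
    have hm : (0:ℝ) < ‖η‖ := norm_pos_iff.mpr hη
    set L : ℝ := ‖ξ - η‖ with hLdef
    set a : ℝ := ‖ξ‖ with hadef
    set m : ℝ := ‖η‖ with hmdef
    set b : ℝ := (inner ℂ (ξ - η) η : ℂ).re with hbdef
    have hCS : b ^ 2 ≤ L ^ 2 * m ^ 2 := by
      have h1 : |b| ≤ ‖(inner ℂ (ξ - η) η : ℂ)‖ := by
        rw [hbdef]
        exact Complex.abs_re_le_norm _
      have h2 : ‖(inner ℂ (ξ - η) η : ℂ)‖ ≤ L * m := norm_inner_le_norm _ _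
      nlinarith [abs_nonneg b, sq_abs b]
    set s : ℝ := b / L ^ 2 with hsdef
    have hs2 : s ^ 2 ≤ m ^ 2 / L ^ 2 := by
      rw [hsdef, div_pow, div_le_div_iff₀ (by positivity) (by positivity)]
      nlinarith
    set t : ℝ := Real.sqrt (m ^ 2 / L ^ 2 - s ^ 2) with htdef
    have ht2 : t ^ 2 = m ^ 2 / L ^ 2 - s ^ 2 := by
      rw [htdef]; exact Real.sq_sqrt (by linarith)
    have hA : 0 < s ^ 2 + t ^ 2 := by
      rw [ht2]
      have : (0:ℝ) < m ^ 2 / L ^ 2 := by positivity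
      linarith
    have hst : t ^ 2 + s ^ 2 = m ^ 2 / L ^ 2 := by rw [ht2]; ring
    have hnorm : a ^ 2 = L ^ 2 + 2 * b + m ^ 2 := by
      have h := @norm_add_sq ℂ _ _ _ _ (ξ - η) η
      simp only [sub_add_cancel, RCLike.re_to_complex] at h
      rw [hadef, hLdef, hmdef, hbdef]
      exact h
    have hq : t ^ 2 + s ^ 2 + 2 * s + 1 = a ^ 2 / L ^ 2 := by
      rw [hst, hsdef, hnorm]
      field_simp
      ring
    have hsq : Real.sqrt (t ^ 2 + s ^ 2 + 2 * s + 1) = a / L := by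
      rw [hq, show a ^ 2 / L ^ 2 = (a / L) ^ 2 by ring,
        Real.sqrt_sq (by positivity)]
    have hqp : (t ^ 2 + s ^ 2 + 2 * s + 1) ^ (p / 2) = (a / L) ^ p := by
      rw [hq, show a ^ 2 / L ^ 2 = (a / L) ^ 2 by ring,
        ← Real.rpow_natCast (a / L) 2, ← Real.rpow_mul (by positivity)]
      congr 1; push_cast; ring
    -- the ratio is an element of `S`
    have hrle : ((t ^ 2 + s ^ 2 + 2 * s + 1) ^ (p / 2) - 1 - p * s) /
        ((Real.sqrt (t ^ 2 + s ^ 2 + 2 * s + 1) + 1) ^ (p - 2) * (t ^ 2 + s ^ 2)) ≤ c3 p :=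
      hmemle s t hA
    -- identities converting the ratio into `Cp`
    have hLp : (0:ℝ) < L ^ p := Real.rpow_pos_of_pos hLpos p
    have hL2 : L ^ p = L ^ (p - 2) * L ^ 2 := by
      rw [← Real.rpow_natCast L 2, ← Real.rpow_add hLpos]
      congr 1; push_cast; ring
    have hdivp : (a / L) ^ p = a ^ p / L ^ p := Real.div_rpow (by positivity) hLpos.le p
    have hN : ((t ^ 2 + s ^ 2 + 2 * s + 1) ^ (p / 2) - 1 - p * s) * L ^ p = Cp n p ξ η := by
      rw [hqp, hdivp, hsdef]
      simp only [Cp, ← hadef, ← hLdef, ← hbdef]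
      rw [hL2]
      field_simp
    have hD : ((Real.sqrt (t ^ 2 + s ^ 2 + 2 * s + 1) + 1) ^ (p - 2) * (t ^ 2 + s ^ 2)) * L ^ p
        = (a + L) ^ (p - 2) * m ^ 2 := by
      rw [hsq, hst, show a / L + 1 = (a + L) / L by field_simp,
        Real.div_rpow (by positivity) hLpos.le, hL2]
      have hLp2 : (0:ℝ) < L ^ (p - 2) := Real.rpow_pos_of_pos hLpos _
      field_simp
    have hDst0 : ((Real.sqrt (t ^ 2 + s ^ 2 + 2 * s + 1) + 1) ^ (p - 2) * (t ^ 2 + s ^ 2)) ≠ 0 := by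
      have h1 : (0:ℝ) < (Real.sqrt (t ^ 2 + s ^ 2 + 2 * s + 1) + 1) ^ (p - 2) :=
        Real.rpow_pos_of_pos (by positivity) _
      have h2 : (0:ℝ) < t ^ 2 + s ^ 2 := by linarith
      positivity
    have hDen0 : (0:ℝ) < (a + L) ^ (p - 2) * m ^ 2 := by
      have : (0:ℝ) < (a + L) ^ (p - 2) := Real.rpow_pos_of_pos (by positivity) _
      positivity
    have hCpr : Cp n p ξ η =
        (((t ^ 2 + s ^ 2 + 2 * s + 1) ^ (p / 2) - 1 - p * s) /
          ((Real.sqrt (t ^ 2 + s ^ 2 + 2 * s + 1) + 1) ^ (p - 2) * (t ^ 2 + s ^ 2))) *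
          ((a + L) ^ (p - 2) * m ^ 2) := by
      rw [← hD, ← hN, div_mul_eq_mul_div, mul_div_assoc, mul_div_cancel_left₀ _ hDst0]
    have hfinal : Cp n p ξ η ≤ c3 p * ((a + L) ^ (p - 2) * m ^ 2) := by
      rw [hCpr]
      exact mul_le_mul_of_nonneg_right hrle hDen0.le
    have heq : c3 p * ((a + L) ^ (p - 2) * m ^ 2) = c3 p * m ^ 2 / (a + L) ^ (2 - p) := by
      rw [show p - 2 = -(2 - p) by ring, Real.rpow_neg (by positivity)]
      ring
    rw [heq] at hfinal
    exact hfinal
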